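/- Let G = (V, E) be a finite DAG with source s and sink t, and let y ∈ ℝ^E assign weights so that every s-t path has total weight in [−1, 1]. For each vertex v let d_min(v), d_max(v) be the weights of the shortest and longest s-to-v paths, and set y'[(u,v)] := y[(u,v)] + d_min(u) − d_min(v) and d_Δ(v) := d_max(v) − d_min(v). Then for every s-t path p (with vertex sequence s = v_0, v_1, …, v_k = t): ∑_{i=1}^k y'[(v_{i-1}, v_i)]² ≤ d_Δ(t)² ≤ 4. -/
import Mathlib


/-- `IsWalk esrc edst u v p` : the list of edges `p` forms a walk from `u` to `v`. -/
def IsWalk {V E : Type*} (esrc edst : E → V) : V → V → List E → Prop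
  | u, v, [] => u = v
  | u, v, e :: es => esrc e = u ∧ IsWalk esrc edst (edst e) v es

lemma isWalk_append {V E : Type*} (esrc edst : E → V) :
    ∀ (p : List E) (u v w : V) (q : List E),
      IsWalk esrc edst u v p → IsWalk esrc edst v w q →
      IsWalk esrc edst u w (p ++ q) := by
  intro p
  induction p with
  | nil => intro u v w q hp hq; cases hp; exact hq
  | cons e es ih =>
    intro u v w q hp hq
    exact ⟨hp.1, ih _ _ _ _ hp.2 hq⟩

theorem shifted_losses_sq_sum_le {V E : Type*} [Fintype V] [Fintype E]
    (esrc edst : E → V) (s t : V)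
    (rank : V → ℕ) (hrank : ∀ e, rank (esrc e) < rank (edst e))
    (y : E → ℝ) (hy : ∀ p, IsWalk esrc edst s t p → |(p.map y).sum| ≤ 1)
    (dmin dmax : V → ℝ)
    (hdmin_le : ∀ v p, IsWalk esrc edst s v p → dmin v ≤ (p.map y).sum)
    (hdmin_ex : ∀ v, ∃ p, IsWalk esrc edst s v p ∧ dmin v = (p.map y).sum)
    (hdmax_ge : ∀ v p, IsWalk esrc edst s v p → (p.map y).sum ≤ dmax v)
    (hdmax_ex : ∀ v, ∃ p, IsWalk esrc edst s v p ∧ dmax v = (p.map y).sum) :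
    ∀ p, IsWalk esrc edst s t p →
      (p.map (fun e => (y e + dmin (esrc e) - dmin (edst e)) ^ 2)).sum ≤
        (dmax t - dmin t) ^ 2 ∧
      (dmax t - dmin t) ^ 2 ≤ 4 := by
  -- dΔ v ≥ 0
  have hdelta_nonneg : ∀ v, 0 ≤ dmax v - dmin v := by
    intro v
    obtain ⟨p, hp, hsum⟩ := hdmin_ex v
    have := hdmax_ge v p hp
    linarith
  -- edge facts
  have hedge_nonneg : ∀ e : E, 0 ≤ y e + dmin (esrc e) - dmin (edst e) := by
    intro e
    obtain ⟨p, hp, hsum⟩ := hdmin_ex (esrc e)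
    have hw : IsWalk esrc edst s (edst e) (p ++ [e]) :=
      isWalk_append esrc edst p s (esrc e) (edst e) [e] hp ⟨rfl, rfl⟩
    have := hdmin_le (edst e) (p ++ [e]) hw
    simp only [List.map_append, List.sum_append, List.map_cons, List.map_nil,
      List.sum_cons, List.sum_nil] at this
    linarith
  have hedge_le : ∀ e : E,
      y e + dmin (esrc e) - dmin (edst e) ≤
        (dmax (edst e) - dmin (edst e)) - (dmax (esrc e) - dmin (esrc e)) := by
    intro e
    obtain ⟨p, hp, hsum⟩ := hdmax_ex (esrc e)
    have hw : IsWalk esrc edst s (edst e) (p ++ [e]) :=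
      isWalk_append esrc edst p s (esrc e) (edst e) [e] hp ⟨rfl, rfl⟩
    have := hdmax_ge (edst e) (p ++ [e]) hw
    simp only [List.map_append, List.sum_append, List.map_cons, List.map_nil,
      List.sum_cons, List.sum_nil] at this
    linarith
  -- key induction
  have key : ∀ (p : List E) (u : V), IsWalk esrc edst u t p →
      (p.map (fun e => (y e + dmin (esrc e) - dmin (edst e)) ^ 2)).sum ≤
        (dmax t - dmin t) ^ 2 - (dmax u - dmin u) ^ 2 := by
    intro p
    induction p with
    | nil => intro u hp; cases hp; simp
    | cons e es ih =>
      intro u hp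
      obtain ⟨he, hes⟩ := hp
      have h1 := ih (edst e) hes
      have h2 := hedge_nonneg e
      have h3 := hedge_le e
      have ha := hdelta_nonneg (esrc e)
      have hb := hdelta_nonneg (edst e)
      subst he
      simp only [List.map_cons, List.sum_cons]
      nlinarith [sq_nonneg (y e + dmin (esrc e) - dmin (edst e))]
  intro p hp
  have h1 := key p s hp
  have h2 : dmax t - dmin t ≤ 2 := by
    obtain ⟨p1, hp1, hs1⟩ := hdmax_ex t
    obtain ⟨p2, hp2, hs2⟩ := hdmin_ex t
    have := abs_le.mp (hy p1 hp1)
    have := abs_le.mp (hy p2 hp2)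
    linarith [this.1, (abs_le.mp (hy p1 hp1)).2]
  have h0 := hdelta_nonneg t
  have h0s := hdelta_nonneg s
  constructor
  · nlinarith [sq_nonneg (dmax s - dmin s)]
  · nlinarith
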